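/- There are at least three pairwise non-affine-equivalent a-subsets of Z_p if and only if (p ≥ 13 and 3 ≤ a ≤ p-3) or (p ≥ 11 and 4 ≤ a ≤ p-4). -/

import Mathlib

/-- Two subsets of `ZMod p` are affine equivalent if one is the image of the other
under `x ↦ ξx + η` with `ξ ≠ 0`. -/
def AffineEquiv' {p : ℕ} (A B : Finset (ZMod p)) : Prop :=
  ∃ ξ η : ZMod p, ξ ≠ 0 ∧ A.image (fun x => ξ * x + η) = B

instance {p : ℕ} [NeZero p] (A B : Finset (ZMod p)) : Decidable (AffineEquiv' A B) :=
  inferInstanceAs (Decidable (∃ ξ η : ZMod p, ξ ≠ 0 ∧ A.image (fun x => ξ * x + η) = B))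

section Lemmas

variable {p : ℕ} [Fact p.Prime]

lemma ae_refl (A : Finset (ZMod p)) : AffineEquiv' A A :=
  ⟨1, 0, one_ne_zero, by simp⟩

lemma ae_symm {A B : Finset (ZMod p)} (h : AffineEquiv' A B) : AffineEquiv' B A := by
  obtain ⟨ξ, η, hξ, rfl⟩ := h
  refine ⟨ξ⁻¹, -(ξ⁻¹ * η), inv_ne_zero hξ, ?_⟩
  rw [Finset.image_image]
  have hc : ((fun y => ξ⁻¹ * y + -(ξ⁻¹ * η)) ∘ fun x => ξ * x + η) = id := by
    funext x
    simp only [Function.comp_apply, id_eq]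
    field_simp
    ring
  rw [hc, Finset.image_id]

lemma ae_trans {A B C : Finset (ZMod p)} (h1 : AffineEquiv' A B) (h2 : AffineEquiv' B C) :
    AffineEquiv' A C := by
  obtain ⟨ξ1, η1, h1ξ, rfl⟩ := h1
  obtain ⟨ξ2, η2, h2ξ, rfl⟩ := h2
  refine ⟨ξ2 * ξ1, ξ2 * η1 + η2, mul_ne_zero h2ξ h1ξ, ?_⟩
  rw [Finset.image_image]
  exact Finset.image_congr (fun x _ => by dsimp; ring)

lemma ae_bij {ξ η : ZMod p} (hξ : ξ ≠ 0) :
    Function.Bijective (fun x : ZMod p => ξ * x + η) := by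
  have hinj : Function.Injective (fun x : ZMod p => ξ * x + η) := by
    intro x y hxy
    simp only at hxy
    exact mul_left_cancel₀ hξ (add_right_cancel hxy)
  exact Finite.injective_iff_bijective.mp hinj

lemma ae_compl {A B : Finset (ZMod p)} (h : AffineEquiv' A B) : AffineEquiv' Aᶜ Bᶜ := by
  classical
  obtain ⟨ξ, η, hξ, rfl⟩ := h
  refine ⟨ξ, η, hξ, ?_⟩
  have hb := ae_bij (p := p) (η := η) hξ
  ext y
  simp only [Finset.mem_compl, Finset.mem_image, not_exists, not_and]
  constructor
  · rintro ⟨x, hx, rfl⟩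
    intro x' hx' hxx
    exact hx (hb.1 hxx ▸ hx')
  · intro hy
    obtain ⟨x, rfl⟩ := hb.2 y
    exact ⟨x, fun hx => hy x hx rfl, rfl⟩

lemma ae_of_card_le_two {A B : Finset (ZMod p)} (h : A.card = B.card) (h2 : A.card ≤ 2) :
    AffineEquiv' A B := by
  obtain h0 | h1 | hc : A.card = 0 ∨ A.card = 1 ∨ A.card = 2 := by omega
  · have hA0 : A = ∅ := Finset.card_eq_zero.mp h0
    have hB0 : B = ∅ := Finset.card_eq_zero.mp (by omega)
    rw [hA0, hB0]
    exact ae_refl _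
  · obtain ⟨x, hAx⟩ := Finset.card_eq_one.mp h1
    obtain ⟨y, hBy⟩ := Finset.card_eq_one.mp (show B.card = 1 by omega)
    rw [hAx, hBy]
    refine ⟨1, y - x, one_ne_zero, ?_⟩
    rw [Finset.image_singleton]
    congr 1
    ring
  · obtain ⟨x1, x2, hx, hAx⟩ := Finset.card_eq_two.mp hc
    obtain ⟨y1, y2, hy, hBy⟩ := Finset.card_eq_two.mp (show B.card = 2 by omega)
    rw [hAx, hBy]
    have hx' : x2 - x1 ≠ 0 := sub_ne_zero.mpr hx.symm
    have hy' : y2 - y1 ≠ 0 := sub_ne_zero.mpr hy.symm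
    set ξ : ZMod p := (y2 - y1) * (x2 - x1)⁻¹ with hxi
    refine ⟨ξ, y1 - ξ * x1, mul_ne_zero hy' (inv_ne_zero hx'), ?_⟩
    have e1 : ξ * x1 + (y1 - ξ * x1) = y1 := by ring
    have e2 : ξ * x2 + (y1 - ξ * x1) = y2 := by
      have : ξ * x2 + (y1 - ξ * x1) = (y2 - y1) * ((x2 - x1)⁻¹ * (x2 - x1)) + y1 := by
        rw [hxi]; ring
      rw [this, inv_mul_cancel₀ hx']
      ring
    rw [Finset.image_insert, Finset.image_singleton, e1, e2]

lemma norm3 {A : Finset (ZMod p)} (hA : A.card = 3) :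
    ∃ lam : ZMod p, lam ≠ 0 ∧ lam ≠ 1 ∧ AffineEquiv' A {0, 1, lam} := by
  obtain ⟨x, y, z, hxy, hxz, hyz, rfl⟩ := Finset.card_eq_three.mp hA
  have hyx : y - x ≠ 0 := sub_ne_zero.mpr hxy.symm
  have hzx : z - x ≠ 0 := sub_ne_zero.mpr hxz.symm
  refine ⟨(z - x) * (y - x)⁻¹, mul_ne_zero hzx (inv_ne_zero hyx), ?_,
    (y - x)⁻¹, -(x * (y - x)⁻¹), inv_ne_zero hyx, ?_⟩
  · intro hcon
    have h1 : (z - x) * ((y - x)⁻¹ * (y - x)) = 1 * (y - x) := by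
      rw [← mul_assoc, hcon]
    rw [inv_mul_cancel₀ hyx, mul_one, one_mul] at h1
    exact hyz (sub_left_injective.eq_iff.mp h1).symm
  · have e1 : (y - x)⁻¹ * x + -(x * (y - x)⁻¹) = 0 := by ring
    have e2 : (y - x)⁻¹ * y + -(x * (y - x)⁻¹) = 1 := by
      have : (y - x)⁻¹ * y + -(x * (y - x)⁻¹) = (y - x)⁻¹ * (y - x) := by ring
      rw [this, inv_mul_cancel₀ hyx]
    have e3 : (y - x)⁻¹ * z + -(x * (y - x)⁻¹) = (z - x) * (y - x)⁻¹ := by ring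
    rw [Finset.image_insert, Finset.image_insert, Finset.image_singleton, e1, e2, e3]

lemma ae_card_compl (A : Finset (ZMod p)) : Aᶜ.card = p - A.card := by
  haveI : NeZero p := ⟨(Fact.out : p.Prime).ne_zero⟩
  rw [Finset.card_compl, ZMod.card]

lemma no_three_of_twoclass {a : ℕ} {S1 S2 : Finset (ZMod p)}
    (h : ∀ A : Finset (ZMod p), A.card = a → AffineEquiv' A S1 ∨ AffineEquiv' A S2) :
    ¬ (∃ A B C : Finset (ZMod p), A.card = a ∧ B.card = a ∧ C.card = a ∧
      ¬ AffineEquiv' A B ∧ ¬ AffineEquiv' A C ∧ ¬ AffineEquiv' B C) := by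
  rintro ⟨A, B, C, hA, hB, hC, hAB, hAC, hBC⟩
  rcases h A hA with h1 | h1 <;> rcases h B hB with h2 | h2 <;> rcases h C hC with h3 | h3
  · exact hAB (ae_trans h1 (ae_symm h2))
  · exact hAB (ae_trans h1 (ae_symm h2))
  · exact hAC (ae_trans h1 (ae_symm h3))
  · exact hBC (ae_trans h2 (ae_symm h3))
  · exact hBC (ae_trans h2 (ae_symm h3))
  · exact hAC (ae_trans h1 (ae_symm h3))
  · exact hAB (ae_trans h1 (ae_symm h2))
  · exact hAB (ae_trans h1 (ae_symm h2))

lemma twoclass_compl {a : ℕ} {S1 S2 : Finset (ZMod p)}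
    (h : ∀ A : Finset (ZMod p), A.card = p - a → AffineEquiv' A S1 ∨ AffineEquiv' A S2) :
    ∀ A : Finset (ZMod p), A.card = a → AffineEquiv' A S1ᶜ ∨ AffineEquiv' A S2ᶜ := by
  intro A hA
  have hAc : Aᶜ.card = p - a := by rw [ae_card_compl, hA]
  rcases h Aᶜ hAc with h' | h'
  · left; simpa using ae_compl h'
  · right; simpa using ae_compl h'

lemma triple_compl {a : ℕ}
    (h : ∃ A B C : Finset (ZMod p), A.card = a ∧ B.card = a ∧ C.card = a ∧
      ¬ AffineEquiv' A B ∧ ¬ AffineEquiv' A C ∧ ¬ AffineEquiv' B C) :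
    ∃ A B C : Finset (ZMod p), A.card = p - a ∧ B.card = p - a ∧ C.card = p - a ∧
      ¬ AffineEquiv' A B ∧ ¬ AffineEquiv' A C ∧ ¬ AffineEquiv' B C := by
  obtain ⟨A, B, C, hA, hB, hC, hAB, hAC, hBC⟩ := h
  refine ⟨Aᶜ, Bᶜ, Cᶜ, by rw [ae_card_compl, hA], by rw [ae_card_compl, hB],
    by rw [ae_card_compl, hC], ?_, ?_, ?_⟩
  · intro hcon; exact hAB (by simpa using ae_compl hcon)
  · intro hcon; exact hAC (by simpa using ae_compl hcon)
  · intro hcon; exact hBC (by simpa using ae_compl hcon)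

lemma exists_three {a : ℕ} (h : 2 * p * p < p.choose a) :
    ∃ A B C : Finset (ZMod p), A.card = a ∧ B.card = a ∧ C.card = a ∧
      ¬ AffineEquiv' A B ∧ ¬ AffineEquiv' A C ∧ ¬ AffineEquiv' B C := by
  classical
  haveI : NeZero p := ⟨(Fact.out : p.Prime).ne_zero⟩
  set S := Finset.powersetCard a (Finset.univ : Finset (ZMod p)) with hS
  have hcard : S.card = p.choose a := by
    rw [hS, Finset.card_powersetCard, Finset.card_univ, ZMod.card]
  have hmemS : ∀ T : Finset (ZMod p), T ∈ S ↔ T.card = a := by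
    intro T
    rw [hS, Finset.mem_powersetCard]
    exact ⟨fun h => h.2, fun h => ⟨Finset.subset_univ T, h⟩⟩
  set orb : Finset (ZMod p) → Finset (Finset (ZMod p)) := fun A =>
    (Finset.univ : Finset (ZMod p × ZMod p)).image
      (fun q => A.image (fun x => q.1 * x + q.2)) with horb
  have horbcard : ∀ A : Finset (ZMod p), (orb A).card ≤ p * p := by
    intro A
    calc (orb A).card ≤ (Finset.univ : Finset (ZMod p × ZMod p)).card :=
          Finset.card_image_le
      _ = p * p := by rw [Finset.card_univ, Fintype.card_prod, ZMod.card]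
  have hmemorb : ∀ A B : Finset (ZMod p), AffineEquiv' A B → B ∈ orb A := by
    rintro A B ⟨ξ, η, _, rfl⟩
    exact Finset.mem_image.mpr ⟨(ξ, η), Finset.mem_univ _, rfl⟩
  have h' : p * p + p * p < p.choose a := by linarith
  have hSne : S.Nonempty := Finset.card_pos.mp (by omega)
  obtain ⟨A, hA⟩ := hSne
  by_cases h1 : ∀ B ∈ S, AffineEquiv' A B
  · exfalso
    have hsub : S ⊆ orb A := fun B hB => hmemorb A B (h1 B hB)
    have hc1 := Finset.card_le_card hsub
    have hc2 := horbcard A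
    omega
  · push_neg at h1
    obtain ⟨B, hB, hAB⟩ := h1
    by_cases h2 : ∀ C ∈ S, AffineEquiv' A C ∨ AffineEquiv' B C
    · exfalso
      have hsub : S ⊆ orb A ∪ orb B := by
        intro C hC
        rcases h2 C hC with hh | hh
        · exact Finset.mem_union_left _ (hmemorb A C hh)
        · exact Finset.mem_union_right _ (hmemorb B C hh)
      have hc1 := Finset.card_le_card hsub
      have hc2 := Finset.card_union_le (orb A) (orb B)
      have hc3 := horbcard A
      have hc4 := horbcard B
      omega
    · push_neg at h2
      obtain ⟨C, hC, hAC, hBC⟩ := h2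
      exact ⟨A, B, C, (hmemS A).mp hA, (hmemS B).mp hB, (hmemS C).mp hC, hAB, hAC, hBC⟩

end Lemmas

lemma choose_mono_half {n : ℕ} : ∀ s, s ≤ n / 2 → ∀ r, r ≤ s → n.choose r ≤ n.choose s
  | 0, _, r, hr => by
    have : r = 0 := by omega
    subst this; exact le_rfl
  | s + 1, hs, r, hr => by
    rcases eq_or_lt_of_le hr with rfl | hlt
    · exact le_rfl
    · exact (choose_mono_half s (by omega) r (by omega)).trans
        (Nat.choose_le_succ_of_lt_half_left (by omega))

lemma choose_le_choose_mid {n r a : ℕ} (h1 : r ≤ a) (h2 : a ≤ n - r) (h3 : r ≤ n) :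
    n.choose r ≤ n.choose a := by
  by_cases ha : a ≤ n / 2
  · exact choose_mono_half a ha r h1
  · have han : a ≤ n := le_trans h2 (Nat.sub_le n r)
    rw [← Nat.choose_symm han]
    exact choose_mono_half (n - a) (by omega) r (by omega)

lemma bound4 {p : ℕ} (hp : 11 ≤ p) : 2 * p * p < p.choose 4 := by
  obtain ⟨m, rfl⟩ : ∃ m, p = m + 11 := ⟨p - 11, by omega⟩
  have hd : (m + 11).descFactorial 4 = (m + 8) * ((m + 9) * ((m + 10) * ((m + 11) * 1))) := by
    have e0 : m + 11 - 0 = m + 11 := by omega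
    have e1 : m + 11 - 1 = m + 10 := by omega
    have e2 : m + 11 - 2 = m + 9 := by omega
    have e3 : m + 11 - 3 = m + 8 := by omega
    simp only [Nat.descFactorial_succ, Nat.descFactorial_zero, e0, e1, e2, e3]
  have hfc := Nat.descFactorial_eq_factorial_mul_choose (m + 11) 4
  rw [hd] at hfc
  have h24 : Nat.factorial 4 = 24 := by norm_num [Nat.factorial]
  rw [h24] at hfc
  have key : 24 * (2 * (m + 11) * (m + 11)) < 24 * ((m + 11).choose 4) := by
    rw [← hfc]
    nlinarith [Nat.zero_le m, Nat.zero_le (m * m), Nat.zero_le (m * m * m),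
      Nat.zero_le (m * m * m * m)]
  exact Nat.lt_of_mul_lt_mul_left key

lemma bound3 {p : ℕ} (hp : 15 ≤ p) : 2 * p * p < p.choose 3 := by
  obtain ⟨m, rfl⟩ : ∃ m, p = m + 15 := ⟨p - 15, by omega⟩
  have hd : (m + 15).descFactorial 3 = (m + 13) * ((m + 14) * ((m + 15) * 1)) := by
    have e0 : m + 15 - 0 = m + 15 := by omega
    have e1 : m + 15 - 1 = m + 14 := by omega
    have e2 : m + 15 - 2 = m + 13 := by omega
    simp only [Nat.descFactorial_succ, Nat.descFactorial_zero, e0, e1, e2]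
  have hfc := Nat.descFactorial_eq_factorial_mul_choose (m + 15) 3
  rw [hd] at hfc
  have h6 : Nat.factorial 3 = 6 := by norm_num [Nat.factorial]
  rw [h6] at hfc
  have key : 6 * (2 * (m + 15) * (m + 15)) < 6 * ((m + 15).choose 3) := by
    rw [← hfc]
    nlinarith [Nat.zero_le m, Nat.zero_le (m * m), Nat.zero_le (m * m * m)]
  exact Nat.lt_of_mul_lt_mul_left key

set_option maxRecDepth 10000 in
lemma dec7 : ∀ lam : ZMod 7, lam ≠ 0 → lam ≠ 1 →
    AffineEquiv' {0, 1, lam} {0, 1, 2} ∨ AffineEquiv' {0, 1, lam} {0, 1, 3} := by decide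

set_option maxRecDepth 10000 in
lemma dec11 : ∀ lam : ZMod 11, lam ≠ 0 → lam ≠ 1 →
    AffineEquiv' {0, 1, lam} {0, 1, 2} ∨ AffineEquiv' {0, 1, lam} {0, 1, 3} := by decide

set_option maxRecDepth 10000 in
lemma dec13 : ¬ AffineEquiv' ({0, 1, 2} : Finset (ZMod 13)) {0, 1, 3} ∧
    ¬ AffineEquiv' ({0, 1, 2} : Finset (ZMod 13)) {0, 1, 4} ∧
    ¬ AffineEquiv' ({0, 1, 3} : Finset (ZMod 13)) {0, 1, 4} := by decide

lemma dc13 : ({0, 1, 2} : Finset (ZMod 13)).card = 3 ∧ ({0, 1, 3} : Finset (ZMod 13)).card = 3 ∧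
    ({0, 1, 4} : Finset (ZMod 13)).card = 3 := by decide

lemma two7 : ∀ A : Finset (ZMod 7), A.card = 3 →
    AffineEquiv' A {0, 1, 2} ∨ AffineEquiv' A {0, 1, 3} := by
  haveI : Fact (Nat.Prime 7) := ⟨by norm_num⟩
  intro A hA
  obtain ⟨lam, h0, h1, hAe⟩ := norm3 hA
  rcases dec7 lam h0 h1 with h | h
  · exact Or.inl (ae_trans hAe h)
  · exact Or.inr (ae_trans hAe h)

lemma two11 : ∀ A : Finset (ZMod 11), A.card = 3 →
    AffineEquiv' A {0, 1, 2} ∨ AffineEquiv' A {0, 1, 3} := by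
  haveI : Fact (Nat.Prime 11) := ⟨by norm_num⟩
  intro A hA
  obtain ⟨lam, h0, h1, hAe⟩ := norm3 hA
  rcases dec11 lam h0 h1 with h | h
  · exact Or.inl (ae_trans hAe h)
  · exact Or.inr (ae_trans hAe h)

lemma triple13 : ∃ A B C : Finset (ZMod 13), A.card = 3 ∧ B.card = 3 ∧ C.card = 3 ∧
    ¬ AffineEquiv' A B ∧ ¬ AffineEquiv' A C ∧ ¬ AffineEquiv' B C :=
  ⟨{0, 1, 2}, {0, 1, 3}, {0, 1, 4}, dc13.1, dc13.2.1, dc13.2.2, dec13.1, dec13.2.1, dec13.2.2⟩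

theorem stmt_17 (p : ℕ) (hp : p.Prime) (a : ℕ) :
    (∃ A B C : Finset (ZMod p), A.card = a ∧ B.card = a ∧ C.card = a ∧
      ¬ AffineEquiv' A B ∧ ¬ AffineEquiv' A C ∧ ¬ AffineEquiv' B C) ↔
    ((13 ≤ p ∧ 3 ≤ a ∧ a ≤ p - 3) ∨ (11 ≤ p ∧ 4 ≤ a ∧ a ≤ p - 4)) := by
  haveI hF : Fact p.Prime := ⟨hp⟩
  haveI : NeZero p := ⟨hp.ne_zero⟩
  constructor
  · intro hL
    by_contra hR
    rw [not_or] at hR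
    obtain ⟨hR1, hR2⟩ := hR
    obtain ⟨A, B, C, hA, hB, hC, hAB, hAC, hBC⟩ := hL
    have hap : a ≤ p := by
      rw [← hA]
      exact le_trans (Finset.card_le_univ A) (le_of_eq (ZMod.card p))
    by_cases h2 : a ≤ 2
    · exact hAB (ae_of_card_le_two (by rw [hA, hB]) (by omega))
    by_cases h2' : p - 2 ≤ a
    · have hcc : AffineEquiv' Aᶜ Bᶜ :=
        ae_of_card_le_two (by rw [ae_card_compl, ae_card_compl, hA, hB])
          (by rw [ae_card_compl, hA]; omega)
      exact hAB (by simpa using ae_compl hcc)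
    -- now 3 ≤ a ≤ p - 3
    have ha3 : 3 ≤ a := by omega
    have hap3 : a ≤ p - 3 := by omega
    have hp13 : p < 13 := by
      by_contra hc
      exact hR1 ⟨by omega, ha3, hap3⟩
    have hp6 : 6 ≤ p := by omega
    have h11 : p = 11 → a = 3 ∨ a = 8 := by
      intro hpe
      by_contra hc
      push_neg at hc
      exact hR2 ⟨by omega, by omega, by omega⟩
    interval_cases p
    · exact absurd hp (by norm_num)
    · have haa : a = 3 ∨ a = 4 := by omega
      rcases haa with rfl | rfl
      · exact no_three_of_twoclass two7 ⟨A, B, C, hA, hB, hC, hAB, hAC, hBC⟩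
      · exact no_three_of_twoclass
          (twoclass_compl (fun A hA => two7 A (by omega)))
          ⟨A, B, C, hA, hB, hC, hAB, hAC, hBC⟩
    · exact absurd hp (by norm_num)
    · exact absurd hp (by norm_num)
    · exact absurd hp (by norm_num)
    · rcases h11 rfl with rfl | rfl
      · exact no_three_of_twoclass two11 ⟨A, B, C, hA, hB, hC, hAB, hAC, hBC⟩
      · exact no_three_of_twoclass
          (twoclass_compl (fun A hA => two11 A (by omega)))
          ⟨A, B, C, hA, hB, hC, hAB, hAC, hBC⟩
    · exact absurd hp (by norm_num)
  · intro h
    have key : (4 ≤ a ∧ a ≤ p - 4 ∧ 11 ≤ p) ∨ (p = 13 ∧ (a = 3 ∨ a = 10)) ∨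
        (15 ≤ p ∧ (a = 3 ∨ a = p - 3)) := by
      rcases h with ⟨h13, h3, h3'⟩ | ⟨h11, h4, h4'⟩
      · by_cases hc : 4 ≤ a ∧ a ≤ p - 4
        · exact Or.inl ⟨hc.1, hc.2, by omega⟩
        · by_cases hp15 : 15 ≤ p
          · exact Or.inr (Or.inr ⟨hp15, by omega⟩)
          · have hpe : p = 13 := by
              have hub : p < 15 := by omega
              interval_cases p
              · rfl
              · exact absurd hp (by norm_num)
            subst hpe
            exact Or.inr (Or.inl ⟨rfl, by omega⟩)
      · exact Or.inl ⟨h4, h4', h11⟩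
    rcases key with ⟨ha4, ha4', hp11⟩ | ⟨hpe, ha⟩ | ⟨hp15, ha⟩
    · exact exists_three (lt_of_lt_of_le (bound4 hp11)
        (choose_le_choose_mid ha4 ha4' (by omega)))
    · subst hpe
      rcases ha with rfl | rfl
      · exact triple13
      · exact triple_compl (p := 13) (a := 3) triple13
    · rcases ha with rfl | rfl
      · exact exists_three (bound3 hp15)
      · exact triple_compl (exists_three (bound3 hp15))
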